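/- Let D = {(x,y) ∈ ℝ² : |y| < x and |y| < 2 - x} ⊂ ℂ. For every t > 0, every integer n ≤ -2, and every z in the closure of D, one has |z + 2n| · |e^{-(z+2n)²/(4t)}| ≤ 4|n| e^{-n²/(4t)}. -/

import Mathlib

open Complex

/-- The open square `D` with vertices `0, 1+i, 2, 1-i`, viewed in `ℂ` via `z = x + iy`. -/
def Dsq : Set ℂ := {z : ℂ | |z.im| < z.re ∧ |z.im| < 2 - z.re}

/-- For `t > 0`, `n ≤ -2` and `z` in the closure of `D`,
`|z + 2n| · |e^{-(z+2n)²/(4t)}| ≤ 4|n| e^{-n²/(4t)}`. -/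
theorem heat_kernel_bound_neg_n (t : ℝ) (ht : 0 < t) (n : ℤ) (hn : n ≤ -2)
    (z : ℂ) (hz : z ∈ closure Dsq) :
    ‖z + 2 * (n : ℂ)‖ * ‖Complex.exp (-(z + 2 * (n : ℂ)) ^ 2 / (4 * (t : ℂ)))‖ ≤
      4 * |(n : ℝ)| * Real.exp (-(n : ℝ) ^ 2 / (4 * t)) := by
  have hcl : closure Dsq ⊆ {w : ℂ | |w.im| ≤ w.re ∧ |w.im| ≤ 2 - w.re} := by
    apply closure_minimal
    · intro w hw; exact ⟨hw.1.le, hw.2.le⟩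
    · exact (isClosed_le Complex.continuous_im.abs Complex.continuous_re).inter
        (isClosed_le Complex.continuous_im.abs (continuous_const.sub Complex.continuous_re))
  obtain ⟨h1, h2⟩ := hcl hz
  set x := z.re with hxdef
  set y := z.im with hydef
  have hnR : (n:ℝ) ≤ -2 := by exact_mod_cast hn
  have habsn : |(n:ℝ)| = -(n:ℝ) := abs_of_neg (by linarith)
  have hx0 : 0 ≤ x := le_trans (abs_nonneg y) h1
  have hx2 : x ≤ 2 := by linarith [abs_nonneg y]
  have hy1 : |y| ≤ 1 := by linarith
  have hw_re : (z + 2*(n:ℂ)).re = x + 2*n := by simp [hxdef]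
  have hw_im : (z + 2*(n:ℂ)).im = y := by simp [hydef]
  have hnorm : ‖z + 2*(n:ℂ)‖ ≤ 4 * |(n:ℝ)| := by
    calc ‖z + 2*(n:ℂ)‖ ≤ |(z + 2*(n:ℂ)).re| + |(z + 2*(n:ℂ)).im| :=
          Complex.norm_le_abs_re_add_abs_im _
      _ ≤ 4 * |(n:ℝ)| := by
          rw [hw_re, hw_im, habsn]
          have h3 : |x + 2*(n:ℝ)| = -(x + 2*n) := abs_of_neg (by linarith)
          rw [h3]
          linarith [abs_le.mp hy1]
  have hexp : ‖Complex.exp (-(z + 2 * (n : ℂ)) ^ 2 / (4 * (t : ℂ)))‖ ≤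
      Real.exp (-(n : ℝ) ^ 2 / (4 * t)) := by
    rw [Complex.norm_exp]
    apply Real.exp_le_exp.mpr
    have hre : (-(z + 2 * (n : ℂ)) ^ 2 / (4 * (t : ℂ))).re
        = -((x + 2*n)^2 - y^2) / (4*t) := by
      have h4 : (4 * (t:ℂ)) = ((4*t : ℝ) : ℂ) := by push_cast; ring
      rw [h4, Complex.div_ofReal_re]
      congr 1
      simp only [Complex.neg_re, sq, Complex.mul_re, hw_re, hw_im]
    rw [hre]
    have hkey : (n:ℝ)^2 ≤ (x + 2*n)^2 - y^2 := by
      rcases le_or_gt x 1 with hx1 | hx1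
      · nlinarith [mul_self_le_mul_self (abs_nonneg y) h1, abs_mul_abs_self y,
          mul_nonneg (show (0:ℝ) ≤ -(n:ℝ) - 2 by linarith) (show (0:ℝ) ≤ 1 - x by linarith),
          mul_nonneg (show (0:ℝ) ≤ -(n:ℝ) by linarith) (show (0:ℝ) ≤ 1 - x by linarith)]
      · nlinarith [mul_self_le_mul_self (abs_nonneg y) h2, abs_mul_abs_self y,
          mul_nonneg (show (0:ℝ) ≤ -(n:ℝ) - 2 by linarith) (show (0:ℝ) ≤ 2 - x by linarith),
          mul_nonneg (show (0:ℝ) ≤ -(n:ℝ) - 2 by linarith) (show (0:ℝ) ≤ x - 1 by linarith)]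
    have h4t : (0:ℝ) < 4*t := by linarith
    have : -((x + 2*n)^2 - y^2) ≤ -(n:ℝ)^2 := by linarith
    exact div_le_div_of_nonneg_right this h4t.le
  calc ‖z + 2 * (n : ℂ)‖ * ‖Complex.exp (-(z + 2 * (n : ℂ)) ^ 2 / (4 * (t : ℂ)))‖
      ≤ (4 * |(n:ℝ)|) * Real.exp (-(n : ℝ) ^ 2 / (4 * t)) :=
        mul_le_mul hnorm hexp (norm_nonneg _) (by positivity)
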